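/- Let a,b>0 and let (γ,δ)∈ℝ² satisfy the strict inequalities γ > −2/a, δ < 2/b and γ−δ < 2. Then the unique smooth solution (u,v) on ℂ∖{0} of the system Δu = 4(e^{au} − e^{v−u}), Δv = 4(e^{v−u} − e^{−bv}) with asymptotic data (γ,δ) satisfies the stronger asymptotics at the origin: the functions z ↦ u(z) − γ log|z| and z ↦ v(z) − δ log|z| are bounded on some punctured neighbourhood of 0. -/

import Mathlib

open Filter

/-- The Euclidean Laplacian of `f : ℂ → ℝ`, viewing `ℂ ≅ ℝ²` with orthonormal
directions `1` and `I`. -/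
noncomputable def lap (f : ℂ → ℝ) (z : ℂ) : ℝ :=
  iteratedFDeriv ℝ 2 f z ![1, 1] + iteratedFDeriv ℝ 2 f z ![Complex.I, Complex.I]

/-- `f` is smooth on `ℂ ∖ {0}`. -/
def SmoothOffZero (f : ℂ → ℝ) : Prop := ContDiffOn ℝ (⊤ : ℕ∞) f {(0 : ℂ)}ᶜ

/-- `f z → 0` as `|z| → ∞`. -/
def TendstoZeroAtInfty (f : ℂ → ℝ) : Prop :=
  Tendsto f (comap (fun z : ℂ => ‖z‖) atTop) (nhds 0)

/-- `f z / log |z| → γ` as `z → 0`. -/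
def LogAsymAtZero (γ : ℝ) (f : ℂ → ℝ) : Prop :=
  Tendsto (fun z : ℂ => f z / Real.log (‖z‖)) (nhdsWithin 0 {(0 : ℂ)}ᶜ) (nhds γ)

/-- `(u, v)` is a smooth solution on `ℂ ∖ {0}` of the two-function tt*-Toda system
`Δu = 4(e^{au} − e^{v−u})`, `Δv = 4(e^{v−u} − e^{−bv})`. -/
def IsTodaSol (a b : ℝ) (u v : ℂ → ℝ) : Prop :=
  SmoothOffZero u ∧ SmoothOffZero v ∧
  ∀ z : ℂ, z ≠ 0 →
    lap u z = 4 * (Real.exp (a * u z) - Real.exp (v z - u z)) ∧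
    lap v z = 4 * (Real.exp (v z - u z) - Real.exp (-(b * v z)))

/-- `(u, v)` has asymptotic data `(γ, δ)`: `u, v → 0` at `∞` and
`u(z)/log|z| → γ`, `v(z)/log|z| → δ` at `0`. -/
def HasAsymData (γ δ : ℝ) (u v : ℂ → ℝ) : Prop :=
  TendstoZeroAtInfty u ∧ TendstoZeroAtInfty v ∧ LogAsymAtZero γ u ∧ LogAsymAtZero δ v



section TodaAux

open Filter Complex

lemma ev_diff {f : ℂ → ℝ} {z : ℂ} (hf : ContDiffAt ℝ 2 f z) :
    ∀ᶠ w in nhds z, DifferentiableAt ℝ f w := by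
  obtain ⟨u, hu, hcd⟩ := hf.contDiffOn (m := 1) (by norm_num) (by norm_num)
  filter_upwards [eventually_mem_nhds_iff.mpr hu] with w hw
  exact (hcd.differentiableOn one_ne_zero).differentiableAt hw

lemma lapD {f : ℂ → ℝ} {z : ℂ} (hf : ContDiffAt ℝ 2 f z) (d : ℂ) :
    HasDerivAt (fun t : ℝ => fderiv ℝ f (z + t • d) d)
      (fderiv ℝ (fderiv ℝ f) z d d) 0 := by
  have hline : HasDerivAt (fun t : ℝ => z + t • d) d 0 :=
    ((hasDerivAt_id (0:ℝ)).smul_const d).const_add z |>.congr_deriv (by simp)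
  have hdf : HasFDerivAt (fderiv ℝ f) (fderiv ℝ (fderiv ℝ f) z) z := by
    have h1 : ContDiffAt ℝ 1 (fderiv ℝ f) z := hf.fderiv_right (by norm_num)
    exact (h1.differentiableAt one_ne_zero).hasFDerivAt
  have hdf' : HasFDerivAt (fderiv ℝ f) (fderiv ℝ (fderiv ℝ f) z) (z + (0:ℝ) • d) := by
    simpa using hdf
  have hcomp : HasDerivAt (fun t : ℝ => fderiv ℝ f (z + t • d))
      (fderiv ℝ (fderiv ℝ f) z d) 0 := hdf'.comp_hasDerivAt 0 hline
  have := hcomp.clm_apply (hasDerivAt_const (0:ℝ) d)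
  simpa using this

lemma lap_eq {f : ℂ → ℝ} {z : ℂ} :
    lap f z = fderiv ℝ (fderiv ℝ f) z 1 1 + fderiv ℝ (fderiv ℝ f) z I I := by
  rw [lap, iteratedFDeriv_two_apply, iteratedFDeriv_two_apply]
  simp

/-- The squared modulus as a real function. -/
noncomputable def Nsq (w : ℂ) : ℝ := w.re ^ 2 + w.im ^ 2

lemma Nsq_pos {z : ℂ} (hz : z ≠ 0) : 0 < Nsq z := by
  have := Complex.normSq_pos.mpr hz
  rw [Complex.normSq_apply] at this
  rw [Nsq]; nlinarith [this]

noncomputable def Dsq (w : ℂ) : ℂ →L[ℝ] ℝ :=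
  (2 * w.re) • Complex.reCLM + (2 * w.im) • Complex.imCLM

lemma hasFDerivAt_Nsq (w : ℂ) : HasFDerivAt Nsq (Dsq w) w := by
  have hre : HasFDerivAt (fun w : ℂ => w.re) (Complex.reCLM : ℂ →L[ℝ] ℝ) w :=
    Complex.reCLM.hasFDerivAt
  have him : HasFDerivAt (fun w : ℂ => w.im) (Complex.imCLM : ℂ →L[ℝ] ℝ) w :=
    Complex.imCLM.hasFDerivAt
  have h1 : HasFDerivAt (fun w : ℂ => w.re * w.re + w.im * w.im) _ w := (hre.mul hre).add (him.mul him)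
  have hfun : Nsq = fun w : ℂ => w.re * w.re + w.im * w.im := by
    funext w; rw [Nsq]; ring
  rw [hfun]
  refine h1.congr_fderiv ?_
  refine ContinuousLinearMap.ext fun v => ?_
  simp [Dsq]
  ring

lemma Dsq_apply_one (w : ℂ) : Dsq w 1 = 2 * w.re := by simp [Dsq]
lemma Dsq_apply_I (w : ℂ) : Dsq w I = 2 * w.im := by simp [Dsq]

lemma radial_fderiv {G G' : ℝ → ℝ} (hG : ∀ s, 0 < s → HasDerivAt G (G' s) s)
    {w : ℂ} (hw : w ≠ 0) :
    HasFDerivAt (fun x => G (Nsq x)) (G' (Nsq w) • Dsq w) w :=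
  (hG (Nsq w) (Nsq_pos hw)).comp_hasFDerivAt w (hasFDerivAt_Nsq w)

/-- Laplacian of a radial function `G(|z|²)` equals `4 A G''(A) + 4 G'(A)`, `A = |z|²`. -/
lemma radial_lap {G G' G'' : ℝ → ℝ}
    (hG : ∀ s, 0 < s → HasDerivAt G (G' s) s)
    (hG' : ∀ s, 0 < s → HasDerivAt G' (G'' s) s)
    {z : ℂ} (hz : z ≠ 0) (hsm : ContDiffAt ℝ 2 (fun w => G (Nsq w)) z) :
    lap (fun w => G (Nsq w)) z
      = 4 * Nsq z * G'' (Nsq z) + 4 * G' (Nsq z) := by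
  set f : ℂ → ℝ := fun w => G (Nsq w) with hfdef
  set x : ℝ := z.re with hx
  set y : ℝ := z.im with hy
  have hA : 0 < Nsq z := Nsq_pos hz
  have key : ∀ d : ℂ, fderiv ℝ (fderiv ℝ f) z d d
      = deriv (fun t : ℝ => fderiv ℝ f (z + t • d) d) 0 := fun d => ((lapD hsm d).deriv).symm
  -- eventual explicit formula along a line
  have hev : ∀ d : ℂ, (fun t : ℝ => fderiv ℝ f (z + t • d) d) =ᶠ[nhds (0:ℝ)]
      (fun t : ℝ => G' (Nsq (z + t • d)) * Dsq (z + t • d) d) := by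
    intro d
    have hlinecont : Continuous (fun t : ℝ => z + t • d) := by continuity
    have htends : Tendsto (fun t : ℝ => z + t • d) (nhds 0) (nhds z) := by
      have := hlinecont.tendsto 0; simpa using this
    filter_upwards [htends.eventually (eventually_ne_nhds hz)] with t ht
    rw [(radial_fderiv hG ht).fderiv]
    simp
  -- direction 1
  have h1 : deriv (fun t : ℝ => fderiv ℝ f (z + t • (1:ℂ)) 1) 0
      = (G'' (Nsq z) * (2 * x)) * (2 * x) + G' (Nsq z) * 2 := by
    rw [(hev 1).deriv_eq]
    have hcoord : (fun t : ℝ => G' (Nsq (z + t • (1:ℂ))) * Dsq (z + t • (1:ℂ)) 1)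
        = fun t : ℝ => G' ((x + t) ^ 2 + y ^ 2) * (2 * (x + t)) := by
      funext t
      rw [Dsq_apply_one]
      have h1 : (z + t • (1:ℂ)).re = x + t := by simp [hx]
      have h2 : (z + t • (1:ℂ)).im = y := by simp [hy]
      rw [show Nsq (z + t • (1:ℂ)) = (x + t) ^ 2 + y ^ 2 by rw [Nsq, h1, h2], h1]
    rw [hcoord]
    have hp : HasDerivAt (fun t : ℝ => (x + t) ^ 2 + y ^ 2) (2 * x) 0 := by
      have hb : HasDerivAt (fun t : ℝ => x + t) 1 0 := by
        simpa using (hasDerivAt_id (0:ℝ)).const_add x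
      have := (hb.pow 2).add_const (y ^ 2)
      simpa using this
    have hval : (fun t : ℝ => (x + t) ^ 2 + y ^ 2) 0 = Nsq z := by simp [Nsq, hx, hy]
    have hval2 : (x + 0) ^ 2 + y ^ 2 = Nsq z := by rw [Nsq]; ring
    have hGat : HasDerivAt G' (G'' (Nsq z)) ((x + 0) ^ 2 + y ^ 2) := by
      rw [hval2]; exact hG' _ hA
    have houter : HasDerivAt (fun t : ℝ => G' ((x + t) ^ 2 + y ^ 2))
        (G'' (Nsq z) * (2 * x)) 0 := by
      exact hGat.comp 0 hp
    have hlin : HasDerivAt (fun t : ℝ => 2 * (x + t)) 2 0 := by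
      have hb : HasDerivAt (fun t : ℝ => x + t) 1 0 := by
        simpa using (hasDerivAt_id (0:ℝ)).const_add x
      simpa using hb.const_mul 2
    have := houter.mul hlin
    have h0 : G' ((x + 0) ^ 2 + y ^ 2) = G' (Nsq z) := by rw [show (x+0)^2+y^2 = Nsq z by rw [Nsq]; ring]
    rw [show (fun t : ℝ => G' ((x + t) ^ 2 + y ^ 2) * (2 * (x + t))) = ((fun t => G' ((x + t) ^ 2 + y ^ 2)) * fun t => 2 * (x + t)) from rfl, this.deriv]
    rw [h0]
    ring
  -- direction I
  have hI : deriv (fun t : ℝ => fderiv ℝ f (z + t • I) I) 0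
      = (G'' (Nsq z) * (2 * y)) * (2 * y) + G' (Nsq z) * 2 := by
    rw [(hev I).deriv_eq]
    have hcoord : (fun t : ℝ => G' (Nsq (z + t • I)) * Dsq (z + t • I) I)
        = fun t : ℝ => G' (x ^ 2 + (y + t) ^ 2) * (2 * (y + t)) := by
      funext t
      rw [Dsq_apply_I]
      have h1 : (z + t • I).re = x := by simp [hx]
      have h2 : (z + t • I).im = y + t := by simp [hy]
      rw [show Nsq (z + t • I) = x ^ 2 + (y + t) ^ 2 by rw [Nsq, h1, h2], h2]
    rw [hcoord]
    have hp : HasDerivAt (fun t : ℝ => x ^ 2 + (y + t) ^ 2) (2 * y) 0 := by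
      have hb : HasDerivAt (fun t : ℝ => y + t) 1 0 := by
        simpa using (hasDerivAt_id (0:ℝ)).const_add y
      have := (hb.pow 2).const_add (x ^ 2)
      simpa using this
    have hval : (fun t : ℝ => x ^ 2 + (y + t) ^ 2) 0 = Nsq z := by simp [Nsq, hx, hy]
    have hval2 : x ^ 2 + (y + 0) ^ 2 = Nsq z := by rw [Nsq]; ring
    have hGat : HasDerivAt G' (G'' (Nsq z)) (x ^ 2 + (y + 0) ^ 2) := by
      rw [hval2]; exact hG' _ hA
    have houter : HasDerivAt (fun t : ℝ => G' (x ^ 2 + (y + t) ^ 2))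
        (G'' (Nsq z) * (2 * y)) 0 := by
      exact hGat.comp 0 hp
    have hlin : HasDerivAt (fun t : ℝ => 2 * (y + t)) 2 0 := by
      have hb : HasDerivAt (fun t : ℝ => y + t) 1 0 := by
        simpa using (hasDerivAt_id (0:ℝ)).const_add y
      simpa using hb.const_mul 2
    have := houter.mul hlin
    have h0 : G' (x ^ 2 + (y + 0) ^ 2) = G' (Nsq z) := by rw [show x^2+(y+0)^2 = Nsq z by rw [Nsq]; ring]
    rw [show (fun t : ℝ => G' (x ^ 2 + (y + t) ^ 2) * (2 * (y + t))) = ((fun t => G' (x ^ 2 + (y + t) ^ 2)) * fun t => 2 * (y + t)) from rfl, this.deriv, h0]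
    ring
  rw [lap_eq, key 1, key I, h1, hI]
  have : Nsq z = x ^ 2 + y ^ 2 := by rw [Nsq]
  rw [this]
  ring

lemma fd2_add {f g : ℂ → ℝ} {z : ℂ} (hf : ContDiffAt ℝ 2 f z) (hg : ContDiffAt ℝ 2 g z) :
    fderiv ℝ (fderiv ℝ (fun w => f w + g w)) z
      = fderiv ℝ (fderiv ℝ f) z + fderiv ℝ (fderiv ℝ g) z := by
  have hev : (fderiv ℝ (fun w => f w + g w)) =ᶠ[nhds z]
      (fun w => fderiv ℝ f w + fderiv ℝ g w) := by
    filter_upwards [ev_diff hf, ev_diff hg] with w h1 h2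
    exact fderiv_add h1 h2
  rw [hev.fderiv_eq]
  exact fderiv_add ((hf.fderiv_right (m := 1) (by norm_num)).differentiableAt one_ne_zero)
    ((hg.fderiv_right (m := 1) (by norm_num)).differentiableAt one_ne_zero)

lemma lap_add {f g : ℂ → ℝ} {z : ℂ} (hf : ContDiffAt ℝ 2 f z) (hg : ContDiffAt ℝ 2 g z) :
    lap (fun w => f w + g w) z = lap f z + lap g z := by
  simp only [lap_eq, fd2_add hf hg]
  simp only [ContinuousLinearMap.add_apply]
  ring

lemma lap_const_mul {f : ℂ → ℝ} {z : ℂ} (c : ℝ) (hf : ContDiffAt ℝ 2 f z) :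
    lap (fun w => c * f w) z = c * lap f z := by
  have hev : (fderiv ℝ (fun w => c * f w)) =ᶠ[nhds z] (fun w => c • fderiv ℝ f w) := by
    filter_upwards [ev_diff hf] with w h1
    exact fderiv_const_mul h1 c
  have h2 : fderiv ℝ (fderiv ℝ (fun w => c * f w)) z = c • fderiv ℝ (fderiv ℝ f) z := by
    rw [hev.fderiv_eq]
    exact fderiv_const_smul ((hf.fderiv_right (m := 1) (by norm_num)).differentiableAt one_ne_zero) c
  simp only [lap_eq, h2]
  simp only [ContinuousLinearMap.smul_apply, ContinuousLinearMap.coe_smul', Pi.smul_apply,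
    smul_eq_mul]
  ring

/-- 1-D second derivative test, filter version. -/
lemma oneD_test {g φ : ℝ → ℝ} {q : ℝ}
    (hg : ∀ᶠ t in nhds (0:ℝ), HasDerivAt g (φ t) t)
    (hq : HasDerivAt φ q 0) (h0 : φ 0 = 0) (hmax : IsLocalMax g 0) : q ≤ 0 := by
  by_contra hpos
  push_neg at hpos
  have hslope : Tendsto (slope φ 0) (nhdsWithin 0 {(0:ℝ)}ᶜ) (nhds q) :=
    hasDerivAt_iff_tendsto_slope.mp hq
  have hev : ∀ᶠ t in nhdsWithin (0:ℝ) (Set.Ioi 0), 0 < φ t := by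
    have h1 : ∀ᶠ t in nhdsWithin (0:ℝ) {(0:ℝ)}ᶜ, 0 < slope φ 0 t :=
      hslope.eventually (eventually_gt_nhds hpos)
    have h2 := h1.filter_mono (nhdsWithin_mono 0 (fun t ht => ne_of_gt ht))
    filter_upwards [h2, self_mem_nhdsWithin] with t ht ht'
    have hsl : slope φ 0 t = φ t / t := by
      simp [slope_def_field, h0]
    rw [hsl] at ht
    have htpos : (0:ℝ) < t := ht'
    have : (φ t / t) * t = φ t := by field_simp
    calc (0:ℝ) = (φ t / t) * 0 := by ring
    _ < (φ t / t) * t := mul_lt_mul_of_pos_left htpos ht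
    _ = φ t := this
  have hmax' : ∀ᶠ t in nhds (0:ℝ), g t ≤ g 0 := hmax
  obtain ⟨δ1, hδ1, hball1⟩ := Metric.eventually_nhds_iff.mp hg
  obtain ⟨δ2, hδ2, hball2⟩ := Metric.eventually_nhds_iff.mp hmax'
  rw [eventually_nhdsWithin_iff] at hev
  obtain ⟨δ3, hδ3, hball3⟩ := Metric.eventually_nhds_iff.mp hev
  set δ : ℝ := min δ1 (min δ2 δ3) / 2 with hδdef
  have hδpos : 0 < δ := by positivity
  have hδ1' : δ < δ1 := by
    have : min δ1 (min δ2 δ3) ≤ δ1 := min_le_left _ _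
    simp only [hδdef]; linarith
  have hδ2' : δ < δ2 := by
    have h := (min_le_right δ1 _).trans (min_le_left δ2 δ3)
    simp only [hδdef]; linarith
  have hδ3' : δ < δ3 := by
    have h := (min_le_right δ1 _).trans (min_le_right δ2 δ3)
    simp only [hδdef]; linarith
  have hIcc : ∀ t ∈ Set.Icc (0:ℝ) δ, HasDerivAt g (φ t) t := by
    intro t ht
    apply hball1
    rw [Real.dist_eq, sub_zero, _root_.abs_of_nonneg ht.1]
    exact lt_of_le_of_lt ht.2 hδ1'
  have hmono : StrictMonoOn g (Set.Icc (0:ℝ) δ) := by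
    apply strictMonoOn_of_deriv_pos (convex_Icc _ _)
    · intro t ht
      exact (hIcc t ht).continuousAt.continuousWithinAt
    · intro t ht
      rw [interior_Icc] at ht
      rw [(hIcc t ⟨le_of_lt ht.1, le_of_lt ht.2⟩).deriv]
      apply hball3
      · rw [Real.dist_eq, sub_zero, _root_.abs_of_nonneg (le_of_lt ht.1)]
        exact lt_trans ht.2 hδ3'
      · exact Set.mem_Ioi.mpr ht.1
  have hlt : g 0 < g δ := hmono (Set.left_mem_Icc.mpr (le_of_lt hδpos))
    (Set.right_mem_Icc.mpr (le_of_lt hδpos)) hδpos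
  have hle : g δ ≤ g 0 := by
    apply hball2
    rw [Real.dist_eq, sub_zero, _root_.abs_of_nonneg (le_of_lt hδpos)]
    exact hδ2'
  linarith

/-- Second derivative test in 2D: at an interior local max, pure second directional
derivatives are ≤ 0. -/
lemma maxtest {f : ℂ → ℝ} {z₀ : ℂ} (hf : ContDiffAt ℝ 2 f z₀)
    (hmax : IsLocalMax f z₀) (d : ℂ) :
    fderiv ℝ (fderiv ℝ f) z₀ d d ≤ 0 := by
  set g : ℝ → ℝ := fun t => f (z₀ + t • d) with hgdef
  set φ : ℝ → ℝ := fun t => fderiv ℝ f (z₀ + t • d) d with hφdef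
  have hlinecont : Continuous (fun t : ℝ => z₀ + t • d) := by continuity
  have htends : Tendsto (fun t : ℝ => z₀ + t • d) (nhds 0) (nhds z₀) := by
    have := hlinecont.tendsto 0
    simpa using this
  have hg : ∀ᶠ t in nhds (0:ℝ), HasDerivAt g (φ t) t := by
    filter_upwards [htends.eventually (ev_diff hf)] with t ht
    have hlinet : HasDerivAt (fun s : ℝ => z₀ + s • d) d t :=
      ((hasDerivAt_id t).smul_const d).const_add z₀ |>.congr_deriv (by simp)
    exact ht.hasFDerivAt.comp_hasDerivAt t hlinet
  have hq : HasDerivAt φ (fderiv ℝ (fderiv ℝ f) z₀ d d) 0 := lapD hf d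
  have h0 : φ 0 = 0 := by
    have := hmax.fderiv_eq_zero
    simp [hφdef, this]
  have hgmax : IsLocalMax g 0 := by
    have hmax' : ∀ᶠ w in nhds z₀, f w ≤ f z₀ := hmax
    have : ∀ᶠ t in nhds (0:ℝ), g t ≤ g 0 := by
      filter_upwards [htends.eventually hmax'] with t ht
      simpa [hgdef] using ht
    exact this
  exact oneD_test hg hq h0 hgmax

/-- Maximum principle on a closed annulus for functions with strictly positive lap. -/
lemma max_principle {r R : ℝ} (hr : 0 < r) (hrR : r < R) {w : ℂ → ℝ}
    (hsm : ∀ z : ℂ, r ≤ ‖z‖ → ‖z‖ ≤ R → ContDiffAt ℝ 2 w z)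
    (hpos : ∀ z : ℂ, r < ‖z‖ → ‖z‖ < R → 0 < lap w z) :
    ∃ z₀ : ℂ, (‖z₀‖ = r ∨ ‖z₀‖ = R) ∧
      ∀ z : ℂ, r ≤ ‖z‖ → ‖z‖ ≤ R → w z ≤ w z₀ := by
  set K : Set ℂ := (fun z : ℂ => ‖z‖) ⁻¹' Set.Icc r R with hK
  have hKc : IsCompact K := by
    apply Metric.isCompact_of_isClosed_isBounded
    · exact IsClosed.preimage continuous_norm isClosed_Icc
    · apply Metric.isBounded_closedBall (x := (0:ℂ)) (r := R) |>.subset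
      intro z hz
      simp only [Metric.mem_closedBall, dist_zero_right]
      exact (hz : ‖z‖ ∈ Set.Icc r R).2
  have hne : K.Nonempty := by
    refine ⟨(r : ℂ), ?_⟩
    simp [hK, Complex.norm_of_nonneg (le_of_lt hr), le_of_lt hrR, abs_of_pos hr]
  have hcont : ContinuousOn w K := by
    intro z hz
    exact ((hsm z (hz : _ ∈ Set.Icc r R).1 (hz : _ ∈ Set.Icc r R).2).continuousAt).continuousWithinAt
  obtain ⟨z₀, hz₀K, hz₀max⟩ := hKc.exists_isMaxOn hne hcont
  have hz₀1 : r ≤ ‖z₀‖ := (hz₀K : _ ∈ Set.Icc r R).1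
  have hz₀2 : ‖z₀‖ ≤ R := (hz₀K : _ ∈ Set.Icc r R).2
  by_cases hbd : ‖z₀‖ = r ∨ ‖z₀‖ = R
  · exact ⟨z₀, hbd, fun z h1 h2 => hz₀max (by exact ⟨h1, h2⟩)⟩
  · exfalso
    push_neg at hbd
    have h1 : r < ‖z₀‖ := lt_of_le_of_ne hz₀1 (Ne.symm hbd.1)
    have h2 : ‖z₀‖ < R := lt_of_le_of_ne hz₀2 hbd.2
    have hopen : IsOpen {z : ℂ | r < ‖z‖ ∧ ‖z‖ < R} := by
      apply IsOpen.inter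
      · exact isOpen_lt continuous_const continuous_norm
      · exact isOpen_lt continuous_norm continuous_const
    have hKnhds : K ∈ nhds z₀ := by
      apply mem_nhds_iff.mpr
      exact ⟨_, fun z hz => ⟨le_of_lt hz.1, le_of_lt hz.2⟩, hopen, ⟨h1, h2⟩⟩
    have hlocmax : IsLocalMax w z₀ := hz₀max.isLocalMax hKnhds
    have hcd : ContDiffAt ℝ 2 w z₀ := hsm z₀ hz₀1 hz₀2
    have hlap : lap w z₀ ≤ 0 := by
      rw [lap_eq]
      have := maxtest hcd hlocmax 1
      have := maxtest hcd hlocmax I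
      linarith [maxtest hcd hlocmax 1, maxtest hcd hlocmax I]
    linarith [hpos z₀ h1 h2]

lemma contDiff_Nsq : ContDiff ℝ 2 Nsq := by
  have hre : ContDiff ℝ 2 (fun w : ℂ => w.re) := Complex.reCLM.contDiff
  have him : ContDiff ℝ 2 (fun w : ℂ => w.im) := Complex.imCLM.contDiff
  exact (hre.pow 2).add (him.pow 2)

lemma abs_eq_sqrt_Nsq (z : ℂ) : ‖z‖ = Real.sqrt (Nsq z) := by
  rw [Complex.norm_def, Complex.normSq_apply, Nsq]; ring_nf

lemma log_abs_eq (z : ℂ) : Real.log (‖z‖) = Real.log (Nsq z) / 2 := by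
  rw [abs_eq_sqrt_Nsq, Real.log_sqrt]
  rw [Nsq]; positivity

lemma pow_abs_eq (κ : ℝ) (z : ℂ) : ‖z‖ ^ κ = Nsq z ^ (κ / 2) := by
  have hnn : (0:ℝ) ≤ Nsq z := by rw [Nsq]; positivity
  rw [abs_eq_sqrt_Nsq, Real.sqrt_eq_rpow, ← Real.rpow_mul hnn]
  congr 1; ring

lemma contDiffAt_log_abs {z : ℂ} (hz : z ≠ 0) :
    ContDiffAt ℝ 2 (fun w => Real.log (‖w‖)) z := by
  have hfun : (fun w => Real.log (‖w‖)) = fun w => Real.log (Nsq w) / 2 := by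
    funext w; exact log_abs_eq w
  rw [hfun]
  exact ((Real.contDiffAt_log.mpr (ne_of_gt (Nsq_pos hz))).comp z
    contDiff_Nsq.contDiffAt).div_const 2

lemma lap_log_abs {z : ℂ} (hz : z ≠ 0) :
    lap (fun w => Real.log (‖w‖)) z = 0 := by
  have hfun : (fun w => Real.log (‖w‖)) = fun w => (fun s => Real.log s / 2) (Nsq w) := by
    funext w; exact log_abs_eq w
  have hA := Nsq_pos hz
  rw [hfun, radial_lap (G' := fun s => s⁻¹ / 2) (G'' := fun s => -(s^2)⁻¹ / 2)
    (fun s hs => (Real.hasDerivAt_log (ne_of_gt hs)).div_const 2)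
    (fun s hs => (hasDerivAt_inv (ne_of_gt hs)).div_const 2) hz
    (by rw [← hfun]; exact contDiffAt_log_abs hz)]
  field_simp
  ring

lemma contDiffAt_pow_abs {κ : ℝ} {z : ℂ} (hz : z ≠ 0) :
    ContDiffAt ℝ 2 (fun w => ‖w‖ ^ κ) z := by
  have hfun : (fun w : ℂ => ‖w‖ ^ κ) = fun w => Nsq w ^ (κ / 2) := by
    funext w; exact pow_abs_eq κ w
  rw [hfun]
  exact (Real.contDiffAt_rpow_const_of_ne (ne_of_gt (Nsq_pos hz))).comp z
    contDiff_Nsq.contDiffAt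

lemma lap_pow_abs (κ : ℝ) {z : ℂ} (hz : z ≠ 0) :
    lap (fun w => ‖w‖ ^ κ) z = κ ^ 2 * ‖z‖ ^ (κ - 2) := by
  have hA := Nsq_pos hz
  have hfun : (fun w : ℂ => ‖w‖ ^ κ)
      = fun w => (fun s : ℝ => s ^ (κ / 2)) (Nsq w) := by
    funext w; exact pow_abs_eq κ w
  have hG : ∀ s : ℝ, 0 < s → HasDerivAt (fun s : ℝ => s ^ (κ / 2))
      ((fun s : ℝ => (κ / 2) * s ^ (κ / 2 - 1)) s) s :=
    fun s hs => Real.hasDerivAt_rpow_const (Or.inl (ne_of_gt hs))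
  have hG' : ∀ s : ℝ, 0 < s → HasDerivAt (fun s : ℝ => (κ / 2) * s ^ (κ / 2 - 1))
      ((fun s : ℝ => (κ / 2) * ((κ / 2 - 1) * s ^ (κ / 2 - 2))) s) s := by
    intro s hs
    have := (Real.hasDerivAt_rpow_const (p := κ / 2 - 1) (Or.inl (ne_of_gt hs))).const_mul (κ / 2)
    have he : κ / 2 - 1 - 1 = κ / 2 - 2 := by ring
    simpa [he] using this
  rw [hfun, radial_lap hG hG' hz (by rw [← hfun]; exact contDiffAt_pow_abs hz)]
  have hpow : ‖z‖ ^ (κ - 2) = Nsq z ^ (κ / 2 - 1) := by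
    rw [pow_abs_eq]; congr 1; ring
  have hmul : Nsq z * Nsq z ^ (κ / 2 - 2) = Nsq z ^ (κ / 2 - 1) := by
    nth_rewrite 1 [← Real.rpow_one (Nsq z)]
    rw [← Real.rpow_add hA]
    congr 1; ring
  rw [hpow]
  beta_reduce
  linear_combination (2 * κ * (κ / 2 - 1)) * hmul

lemma lap_Nsq {z : ℂ} (hz : z ≠ 0) : lap Nsq z = 4 := by
  have hfun : Nsq = fun w => (fun s : ℝ => s) (Nsq w) := by funext w; rfl
  rw [hfun, radial_lap (G' := fun _ => (1:ℝ)) (G'' := fun _ => (0:ℝ))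
    (fun s _ => hasDerivAt_id' (x := s)) (fun s _ => hasDerivAt_const s 1) hz
    (by exact contDiff_Nsq.contDiffAt)]
  ring

lemma Nsq_eq_sq_abs (z : ℂ) : Nsq z = ‖z‖ ^ 2 := by
  rw [abs_eq_sqrt_Nsq, Real.sq_sqrt]
  rw [Nsq]; positivity

lemma Nsq_nonneg (z : ℂ) : 0 ≤ Nsq z := by rw [Nsq]; positivity

/-- Comparison/barrier lemma: a function with nonnegative lap near 0 which is
`o(log)` at 0 is bounded above near 0. -/
lemma comparison {f : ℂ → ℝ} (hsm : ∀ z : ℂ, z ≠ 0 → ContDiffAt ℝ 2 f z)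
    {R₁ : ℝ} (hR₁ : 0 < R₁)
    (hlap : ∀ z : ℂ, z ≠ 0 → ‖z‖ < R₁ → 0 ≤ lap f z)
    (hsmall : Tendsto (fun z : ℂ => f z / Real.log (‖z‖))
      (nhdsWithin 0 {(0:ℂ)}ᶜ) (nhds 0)) :
    ∃ ε > (0:ℝ), ∃ C : ℝ, ∀ z : ℂ, z ≠ 0 → ‖z‖ < ε → f z ≤ C := by
  set r₀ : ℝ := min R₁ 1 / 2 with hr₀def
  have hr₀pos : 0 < r₀ := by positivity
  have hr₀R : r₀ < R₁ := by
    have : min R₁ 1 ≤ R₁ := min_le_left _ _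
    simp only [hr₀def]; linarith
  have hr₀1 : r₀ < 1 := by
    have : min R₁ 1 ≤ 1 := min_le_right _ _
    simp only [hr₀def]; linarith
  -- bound on circle of radius r₀
  have hsph : (Metric.sphere (0:ℂ) r₀).Nonempty := by
    refine ⟨(r₀ : ℂ), ?_⟩
    simp [Complex.norm_of_nonneg hr₀pos.le, hr₀pos.le]
  have hcont : ContinuousOn f (Metric.sphere (0:ℂ) r₀) := by
    intro z hz
    have hz0 : z ≠ 0 := by
      intro h
      rw [h] at hz
      simp [Metric.mem_sphere, dist_zero_right] at hz
      exact absurd hz.symm (ne_of_gt hr₀pos)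
    exact ((hsm z hz0).continuousAt).continuousWithinAt
  obtain ⟨zM, hzM, hzMmax⟩ := (isCompact_sphere (0:ℂ) r₀).exists_isMaxOn hsph hcont
  set C : ℝ := max (f zM) 0 with hCdef
  have hC0 : 0 ≤ C := le_max_right _ _
  refine ⟨r₀, hr₀pos, C, ?_⟩
  intro z₁ hz₁ hz₁r
  have habs₁ : 0 < ‖z₁‖ := by
    simpa [norm_pos_iff] using hz₁
  have hlog₁neg : Real.log (‖z₁‖) < 0 :=
    Real.log_neg habs₁ (lt_trans hz₁r hr₀1)
  set M : ℝ := r₀ ^ 2 + (- Real.log (‖z₁‖)) with hMdef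
  have hMpos : 0 < M := by
    have := hlog₁neg
    simp only [hMdef]; nlinarith [hr₀pos]
  -- show f z₁ ≤ C + t * M for every t > 0
  have key : ∀ t : ℝ, 0 < t → f z₁ ≤ C + t * M := by
    intro t ht
    -- smallness radius ρ
    have hev : ∀ᶠ z in nhdsWithin (0:ℂ) {(0:ℂ)}ᶜ,
        |f z / Real.log (‖z‖)| < t / 2 := by
      have h := Metric.tendsto_nhds.mp hsmall (t / 2) (by positivity)
      simp only [Real.dist_eq, sub_zero] at h
      exact h
    rw [eventually_nhdsWithin_iff] at hev
    obtain ⟨ρ', hρ', hball⟩ := Metric.eventually_nhds_iff.mp hev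
    set ρ : ℝ := min ρ' (‖z₁‖) / 2 with hρdef
    have hρpos : 0 < ρ := by positivity
    have hρz₁ : ρ < ‖z₁‖ := by
      have : min ρ' (‖z₁‖) ≤ ‖z₁‖ := min_le_right _ _
      simp only [hρdef]; linarith
    have hρρ' : ρ < ρ' := by
      have : min ρ' (‖z₁‖) ≤ ρ' := min_le_left _ _
      simp only [hρdef]; linarith
    have hρr₀ : ρ < r₀ := lt_trans hρz₁ hz₁r
    have hρ1 : ρ < 1 := lt_trans hρr₀ hr₀1
    -- smallness estimate for |z| ≤ ρ
    have hFρ : ∀ z : ℂ, z ≠ 0 → ‖z‖ ≤ ρ → f z ≤ t / 2 * (- Real.log (‖z‖)) := by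
      intro z hz hzρ
      have habs : 0 < ‖z‖ := by simpa [norm_pos_iff] using hz
      have hlt1 : ‖z‖ < 1 := lt_of_le_of_lt hzρ hρ1
      have hlogneg : Real.log (‖z‖) < 0 := Real.log_neg habs hlt1
      have hlogne : Real.log (‖z‖) ≠ 0 := ne_of_lt hlogneg
      have hsl : |f z / Real.log (‖z‖)| < t / 2 := by
        apply hball
        · rw [dist_zero_right]
          exact lt_of_le_of_lt hzρ hρρ'
        · simpa using hz
      have h1 : |f z| = |f z / Real.log (‖z‖)| * |Real.log (‖z‖)| := by
        rw [← abs_mul, div_mul_cancel₀ _ hlogne]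
      have h2 : |Real.log (‖z‖)| = - Real.log (‖z‖) :=
        abs_of_neg hlogneg
      calc f z ≤ |f z| := le_abs_self _
      _ = |f z / Real.log (‖z‖)| * |Real.log (‖z‖)| := h1
      _ ≤ t / 2 * |Real.log (‖z‖)| := by
          apply mul_le_mul_of_nonneg_right (le_of_lt hsl) (abs_nonneg _)
      _ = t / 2 * (- Real.log (‖z‖)) := by rw [h2]
    -- the barrier-augmented function
    set w : ℂ → ℝ := fun z => f z + t * Real.log (‖z‖) + t * Nsq z with hwdef
    have hwsm : ∀ z : ℂ, ρ ≤ ‖z‖ → ‖z‖ ≤ r₀ → ContDiffAt ℝ 2 w z := by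
      intro z h1 _
      have hz : z ≠ 0 := by
        intro h; rw [h] at h1; simp at h1; linarith
      exact ((hsm z hz).add ((contDiffAt_const (c := t)).mul (contDiffAt_log_abs hz))).add
        ((contDiffAt_const (c := t)).mul contDiff_Nsq.contDiffAt)
    have hwpos : ∀ z : ℂ, ρ < ‖z‖ → ‖z‖ < r₀ → 0 < lap w z := by
      intro z h1 h2
      have hz : z ≠ 0 := by
        intro h; rw [h] at h1; simp at h1; linarith
      have e1 : lap w z = lap (fun z => f z + t * Real.log (‖z‖)) z
          + lap (fun z => t * Nsq z) z :=
        lap_add ((hsm z hz).add ((contDiffAt_const (c := t)).mul (contDiffAt_log_abs hz)))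
          ((contDiffAt_const (c := t)).mul contDiff_Nsq.contDiffAt)
      have e2 : lap (fun z => f z + t * Real.log (‖z‖)) z
          = lap f z + lap (fun z => t * Real.log (‖z‖)) z :=
        lap_add (hsm z hz) ((contDiffAt_const (c := t)).mul (contDiffAt_log_abs hz))
      have e3 : lap (fun z => t * Real.log (‖z‖)) z = 0 := by
        rw [lap_const_mul t (contDiffAt_log_abs hz), lap_log_abs hz, mul_zero]
      have e4 : lap (fun z => t * Nsq z) z = 4 * t := by
        rw [lap_const_mul t contDiff_Nsq.contDiffAt, lap_Nsq hz]; ring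
      have hf0 : 0 ≤ lap f z := hlap z hz (lt_trans h2 hr₀R)
      rw [e1, e2, e3, e4]
      linarith
    obtain ⟨z₀, hz₀bd, hz₀max⟩ := max_principle hρpos hρr₀ hwsm hwpos
    have hwz₁ : w z₁ ≤ w z₀ := hz₀max z₁ (le_of_lt hρz₁) (le_of_lt hz₁r) |>.trans le_rfl
    -- bound w z₀
    have hwz₀ : w z₀ ≤ C + t * r₀ ^ 2 := by
      rcases hz₀bd with h | h
      · -- inner circle
        have hz₀ : z₀ ≠ 0 := by
          intro hh; rw [hh] at h; simp at h; linarith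
        have hf₀ : f z₀ ≤ t / 2 * (- Real.log ρ) := by
          have := hFρ z₀ hz₀ (le_of_eq h)
          rw [h] at this; exact this
        have hlogρneg : Real.log ρ < 0 := Real.log_neg hρpos hρ1
        have hNz₀ : Nsq z₀ = ρ ^ 2 := by rw [Nsq_eq_sq_abs, h]
        have : w z₀ = f z₀ + t * Real.log ρ + t * ρ ^ 2 := by
          rw [hwdef]; simp only; rw [h, hNz₀]
        rw [this]
        have hρr₀sq : ρ ^ 2 ≤ r₀ ^ 2 := by nlinarith
        nlinarith
      · -- outer circle
        have hz₀ : z₀ ≠ 0 := by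
          intro hh; rw [hh] at h; simp at h; linarith
        have hz₀sph : z₀ ∈ Metric.sphere (0:ℂ) r₀ := by
          simp [Metric.mem_sphere, dist_zero_right, h]
        have hf₀ : f z₀ ≤ C := le_trans (hzMmax hz₀sph) (le_max_left _ _)
        have hlogr₀ : Real.log r₀ ≤ 0 := Real.log_nonpos (le_of_lt hr₀pos) (le_of_lt hr₀1)
        have hNz₀ : Nsq z₀ = r₀ ^ 2 := by rw [Nsq_eq_sq_abs, h]
        have : w z₀ = f z₀ + t * Real.log r₀ + t * r₀ ^ 2 := by
          rw [hwdef]; simp only; rw [h, hNz₀]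
        rw [this]
        nlinarith
    -- conclude
    have : f z₁ = w z₁ - t * Real.log (‖z₁‖) - t * Nsq z₁ := by
      rw [hwdef]; ring
    rw [this]
    have hN₁ : 0 ≤ Nsq z₁ := Nsq_nonneg z₁
    have := le_trans hwz₁ hwz₀
    simp only [hMdef]
    nlinarith
  -- let t → 0
  apply le_of_forall_pos_le_add
  intro ε hε
  have := key (ε / M) (by positivity)
  have hMM : ε / M * M = ε := div_mul_cancel₀ ε (ne_of_gt hMpos)
  linarith

lemma smooth_contDiffAt {f : ℂ → ℝ} (h : SmoothOffZero f) {z : ℂ} (hz : z ≠ 0) :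
    ContDiffAt ℝ 2 f z := by
  have h1 : ContDiffAt ℝ (⊤ : ℕ∞) f z :=
    (h z hz).contDiffAt (isOpen_compl_singleton.mem_nhds hz)
  exact h1.of_le (by norm_cast)

-- helper limits on the punctured filter
lemma ev_abs_lt_one : ∀ᶠ z in nhdsWithin (0:ℂ) {(0:ℂ)}ᶜ, ‖z‖ < 1 := by
  have h : ∀ᶠ z in nhds (0:ℂ), ‖z‖ < 1 := by
    have := Metric.ball_mem_nhds (0:ℂ) one_pos
    filter_upwards [this] with z hz
    simpa [mem_ball_zero_iff] using hz
  exact h.filter_mono nhdsWithin_le_nhds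

lemma ev_log_neg : ∀ᶠ z in nhdsWithin (0:ℂ) {(0:ℂ)}ᶜ, Real.log (‖z‖) < 0 := by
  filter_upwards [ev_abs_lt_one, self_mem_nhdsWithin] with z h1 h2
  exact Real.log_neg (by simpa [norm_pos_iff] using h2) h1

lemma tendsto_abs_punctured : Tendsto (fun z : ℂ => ‖z‖)
    (nhdsWithin (0:ℂ) {(0:ℂ)}ᶜ) (nhdsWithin (0:ℝ) (Set.Ioi 0)) := by
  rw [tendsto_nhdsWithin_iff]
  constructor
  · have := (continuous_norm.tendsto 0).mono_left
      (nhdsWithin_le_nhds (s := {(0:ℂ)}ᶜ))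
    simpa using this
  · filter_upwards [self_mem_nhdsWithin] with z hz
    exact Set.mem_Ioi.mpr (by simpa [norm_pos_iff] using hz)

lemma tendsto_log_abs_atBot : Tendsto (fun z : ℂ => Real.log (‖z‖))
    (nhdsWithin (0:ℂ) {(0:ℂ)}ᶜ) atBot :=
  Real.tendsto_log_nhdsGT_zero.comp tendsto_abs_punctured

lemma tendsto_inv_log_abs : Tendsto (fun z : ℂ => (Real.log (‖z‖))⁻¹)
    (nhdsWithin (0:ℂ) {(0:ℂ)}ᶜ) (nhds 0) := by
  have h1 : Tendsto (fun z : ℂ => - Real.log (‖z‖))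
      (nhdsWithin (0:ℂ) {(0:ℂ)}ᶜ) atTop :=
    tendsto_neg_atBot_atTop.comp tendsto_log_abs_atBot
  have h2 := h1.inv_tendsto_atTop
  have h3 := h2.neg
  simp only [Pi.inv_apply, neg_zero] at h3
  have : (fun z : ℂ => (Real.log (‖z‖))⁻¹)
      = fun z : ℂ => -(- Real.log (‖z‖))⁻¹ := by
    funext z; rw [inv_neg, neg_neg]
  rw [this]
  exact h3

lemma tendsto_pow_div_log (κ : ℝ) (hκ : 0 < κ) :
    Tendsto (fun z : ℂ => ‖z‖ ^ κ / Real.log (‖z‖))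
    (nhdsWithin (0:ℂ) {(0:ℂ)}ᶜ) (nhds 0) := by
  simp only [div_eq_mul_inv]
  apply squeeze_zero_norm' (a := fun z : ℂ => |(Real.log (‖z‖))⁻¹|)
  · filter_upwards [ev_abs_lt_one, self_mem_nhdsWithin] with z h1 h2
    have habs : 0 < ‖z‖ := by simpa [norm_pos_iff] using h2
    have hle1 : ‖z‖ ^ κ ≤ 1 := by
      apply Real.rpow_le_one (le_of_lt habs) (le_of_lt h1) (le_of_lt hκ)
    have hnn : 0 ≤ ‖z‖ ^ κ := Real.rpow_nonneg (le_of_lt habs) κ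
    rw [Real.norm_eq_abs, abs_mul, _root_.abs_of_nonneg hnn]
    nlinarith [abs_nonneg (Real.log (‖z‖))⁻¹]
  · have := tendsto_inv_log_abs.abs
    simpa using this

lemma one_side {f₀ : ℂ → ℝ} (hf₀ : SmoothOffZero f₀) (γ₀ : ℝ)
    (hlim : Tendsto (fun z : ℂ => f₀ z / Real.log (‖z‖))
      (nhdsWithin 0 {(0:ℂ)}ᶜ) (nhds γ₀))
    (σ : ℝ) {κ : ℝ} (hκ : 0 < κ) {R₀ : ℝ} (hR₀ : 0 < R₀)
    (hlapbd : ∀ z : ℂ, z ≠ 0 → ‖z‖ < R₀ →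
      -(4 * ‖z‖ ^ (κ - 2)) ≤ σ * lap f₀ z) :
    ∃ ε > (0:ℝ), ∃ C : ℝ, ∀ z : ℂ, z ≠ 0 → ‖z‖ < ε →
      σ * (f₀ z - γ₀ * Real.log (‖z‖)) ≤ C := by
  set c : ℝ := 4 / κ ^ 2 with hcdef
  have hc0 : 0 ≤ c := by positivity
  set β : ℝ := -(σ * γ₀) with hβdef
  set F : ℂ → ℝ := fun z => σ * f₀ z + β * Real.log (‖z‖)
    + c * ‖z‖ ^ κ with hFdef
  have hsmF : ∀ z : ℂ, z ≠ 0 → ContDiffAt ℝ 2 F z := by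
    intro z hz
    exact ((contDiffAt_const.mul (smooth_contDiffAt hf₀ hz)).add
      (contDiffAt_const.mul (contDiffAt_log_abs hz))).add
      (contDiffAt_const.mul (contDiffAt_pow_abs hz))
  have hlapF : ∀ z : ℂ, z ≠ 0 → ‖z‖ < R₀ → 0 ≤ lap F z := by
    intro z hz hzR
    have e1 : lap F z = lap (fun w => σ * f₀ w + β * Real.log (‖w‖)) z
        + lap (fun w => c * ‖w‖ ^ κ) z :=
      lap_add ((contDiffAt_const.mul (smooth_contDiffAt hf₀ hz)).add
        (contDiffAt_const.mul (contDiffAt_log_abs hz)))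
        (contDiffAt_const.mul (contDiffAt_pow_abs hz))
    have e2 : lap (fun w => σ * f₀ w + β * Real.log (‖w‖)) z
        = lap (fun w => σ * f₀ w) z + lap (fun w => β * Real.log (‖w‖)) z :=
      lap_add (contDiffAt_const.mul (smooth_contDiffAt hf₀ hz))
        (contDiffAt_const.mul (contDiffAt_log_abs hz))
    have e3 : lap (fun w => σ * f₀ w) z = σ * lap f₀ z :=
      lap_const_mul σ (smooth_contDiffAt hf₀ hz)
    have e4 : lap (fun w => β * Real.log (‖w‖)) z = 0 := by
      rw [lap_const_mul β (contDiffAt_log_abs hz), lap_log_abs hz, mul_zero]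
    have e5 : lap (fun w => c * ‖w‖ ^ κ) z = 4 * ‖z‖ ^ (κ - 2) := by
      rw [lap_const_mul c (contDiffAt_pow_abs hz), lap_pow_abs κ hz, hcdef]
      field_simp
    rw [e1, e2, e3, e4, e5]
    have := hlapbd z hz hzR
    linarith
  have hsmallF : Tendsto (fun z : ℂ => F z / Real.log (‖z‖))
      (nhdsWithin 0 {(0:ℂ)}ᶜ) (nhds 0) := by
    have t1 := hlim.const_mul σ
    have t2 : Tendsto (fun z : ℂ => Real.log (‖z‖) / Real.log (‖z‖))
        (nhdsWithin 0 {(0:ℂ)}ᶜ) (nhds 1) := by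
      apply Tendsto.congr' _ tendsto_const_nhds
      filter_upwards [ev_log_neg] with z hz
      exact (div_self (ne_of_lt hz)).symm
    have t2' := t2.const_mul β
    have t3 := (tendsto_pow_div_log κ hκ).const_mul c
    have T := (t1.add t2').add t3
    have hval : σ * γ₀ + β * 1 + c * 0 = 0 := by rw [hβdef]; ring
    rw [hval] at T
    apply Tendsto.congr' _ T
    filter_upwards [ev_log_neg] with z hz
    have hne : Real.log (‖z‖) ≠ 0 := ne_of_lt hz
    rw [hFdef]
    field_simp
  obtain ⟨ε, hε, C, hC⟩ := comparison hsmF hR₀ hlapF hsmallF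
  refine ⟨ε, hε, C, ?_⟩
  intro z hz hzε
  have hFz := hC z hz hzε
  have hpow : 0 ≤ c * ‖z‖ ^ κ :=
    mul_nonneg hc0 (Real.rpow_nonneg (norm_nonneg z) κ)
  have : σ * (f₀ z - γ₀ * Real.log (‖z‖))
      = F z - c * ‖z‖ ^ κ := by
    rw [hFdef, hβdef]; ring
  rw [this]
  linarith

lemma exp_ev {g : ℂ → ℝ} {L κ : ℝ}
    (hg : Tendsto (fun z : ℂ => g z / Real.log (‖z‖))
      (nhdsWithin 0 {(0:ℂ)}ᶜ) (nhds L))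
    (hgt : κ - 2 < L) :
    ∀ᶠ z in nhdsWithin (0:ℂ) {(0:ℂ)}ᶜ,
      Real.exp (g z) ≤ ‖z‖ ^ (κ - 2) := by
  filter_upwards [hg.eventually (eventually_gt_nhds hgt), ev_log_neg,
    self_mem_nhdsWithin] with z h1 h2 h3
  have habs : 0 < ‖z‖ := by simpa [norm_pos_iff] using h3
  have hne : Real.log (‖z‖) ≠ 0 := ne_of_lt h2
  have hglt : g z < (κ - 2) * Real.log (‖z‖) := by
    have hmul := mul_lt_mul_of_neg_right h1 h2
    rw [div_mul_cancel₀ _ hne] at hmul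
    exact hmul
  calc Real.exp (g z) ≤ Real.exp ((κ - 2) * Real.log (‖z‖)) :=
        Real.exp_le_exp.mpr (le_of_lt hglt)
  _ = ‖z‖ ^ (κ - 2) := by
      rw [Real.rpow_def_of_pos habs, mul_comm]


end TodaAux

/-- For asymptotic data in the open region, the solution has the stronger
asymptotics `u(z) = γ log|z| + O(1)`, `v(z) = δ log|z| + O(1)` at the origin. -/
theorem toda_strong_asymptotics_interior (a b γ δ : ℝ) (ha : 0 < a) (hb : 0 < b)
    (h1 : -2 / a < γ) (h2 : δ < 2 / b) (h3 : γ - δ < 2)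
    (u v : ℂ → ℝ) (hsol : IsTodaSol a b u v) (hasym : HasAsymData γ δ u v) :
    ∃ ε > (0 : ℝ), ∃ C : ℝ, ∀ z : ℂ, z ≠ 0 → ‖z‖ < ε →
      |u z - γ * Real.log (‖z‖)| ≤ C ∧
      |v z - δ * Real.log (‖z‖)| ≤ C := by
  obtain ⟨hu, hv, hpde⟩ := hsol
  obtain ⟨-, -, hγu, hδv⟩ := hasym
  -- positivity of the region quantities
  have haγ : -2 < a * γ := by
    have := (div_lt_iff₀ ha).mp h1
    nlinarith [mul_comm a γ]
  have hbδ : b * δ < 2 := by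
    have := (lt_div_iff₀ hb).mp h2
    nlinarith [mul_comm b δ]
  have hδγ : -2 < δ - γ := by linarith
  -- choice of κ
  set κ : ℝ := min (min (2 + a * γ) (2 + (δ - γ))) (2 - b * δ) / 2 with hκdef
  have hκpos : 0 < κ := by
    have e1 : 0 < 2 + a * γ := by linarith
    have e2 : 0 < 2 + (δ - γ) := by linarith
    have e3 : 0 < 2 - b * δ := by linarith
    have : 0 < min (min (2 + a * γ) (2 + (δ - γ))) (2 - b * δ) :=
      lt_min (lt_min e1 e2) e3
    simp only [hκdef]; linarith
  have hκ1 : κ - 2 < a * γ := by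
    have e1 : min (min (2 + a * γ) (2 + (δ - γ))) (2 - b * δ) ≤ 2 + a * γ :=
      le_trans (min_le_left _ _) (min_le_left _ _)
    simp only [hκdef]; linarith
  have hκ2 : κ - 2 < δ - γ := by
    have e1 : min (min (2 + a * γ) (2 + (δ - γ))) (2 - b * δ) ≤ 2 + (δ - γ) :=
      le_trans (min_le_left _ _) (min_le_right _ _)
    simp only [hκdef]; linarith
  have hκ3 : κ - 2 < -(b * δ) := by
    have e1 : min (min (2 + a * γ) (2 + (δ - γ))) (2 - b * δ) ≤ 2 - b * δ :=
      min_le_right _ _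
    simp only [hκdef]; linarith
  -- limits of the exponents over log
  have hau : Tendsto (fun z : ℂ => (a * u z) / Real.log (‖z‖))
      (nhdsWithin 0 {(0:ℂ)}ᶜ) (nhds (a * γ)) := by
    apply Tendsto.congr _ (hγu.const_mul a)
    intro z; rw [mul_div_assoc]
  have hvu : Tendsto (fun z : ℂ => (v z - u z) / Real.log (‖z‖))
      (nhdsWithin 0 {(0:ℂ)}ᶜ) (nhds (δ - γ)) := by
    apply Tendsto.congr _ (hδv.sub hγu)
    intro z; rw [sub_div]
  have hbv : Tendsto (fun z : ℂ => (-(b * v z)) / Real.log (‖z‖))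
      (nhdsWithin 0 {(0:ℂ)}ᶜ) (nhds (-(b * δ))) := by
    apply Tendsto.congr _ ((hδv.const_mul b).neg)
    intro z; rw [neg_div, mul_div_assoc]
  -- eventual exponential bounds, packaged on a punctured ball
  have hevP : ∀ᶠ z in nhdsWithin (0:ℂ) {(0:ℂ)}ᶜ,
      Real.exp (a * u z) ≤ ‖z‖ ^ (κ - 2) ∧
      Real.exp (v z - u z) ≤ ‖z‖ ^ (κ - 2) ∧
      Real.exp (-(b * v z)) ≤ ‖z‖ ^ (κ - 2) := by
    filter_upwards [exp_ev hau hκ1, exp_ev hvu hκ2, exp_ev hbv hκ3] with z e1 e2 e3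
    exact ⟨e1, e2, e3⟩
  rw [eventually_nhdsWithin_iff] at hevP
  obtain ⟨R₀, hR₀pos, hball⟩ := Metric.eventually_nhds_iff.mp hevP
  have hbound : ∀ z : ℂ, z ≠ 0 → ‖z‖ < R₀ →
      Real.exp (a * u z) ≤ ‖z‖ ^ (κ - 2) ∧
      Real.exp (v z - u z) ≤ ‖z‖ ^ (κ - 2) ∧
      Real.exp (-(b * v z)) ≤ ‖z‖ ^ (κ - 2) := by
    intro z hz hzR
    apply hball
    · rw [dist_zero_right]; exact hzR
    · simpa using hz
  -- four one-sided bounds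
  obtain ⟨ε₁, hε₁, C₁, hC₁⟩ := one_side hu γ hγu 1 hκpos hR₀pos (by
    intro z hz hzR
    obtain ⟨e1, e2, e3⟩ := hbound z hz hzR
    have hp := (hpde z hz).1
    have := Real.exp_pos (a * u z)
    rw [one_mul, hp]
    linarith)
  obtain ⟨ε₂, hε₂, C₂, hC₂⟩ := one_side hu γ hγu (-1) hκpos hR₀pos (by
    intro z hz hzR
    obtain ⟨e1, e2, e3⟩ := hbound z hz hzR
    have hp := (hpde z hz).1
    have := Real.exp_pos (v z - u z)
    rw [neg_one_mul, hp]
    linarith)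
  obtain ⟨ε₃, hε₃, C₃, hC₃⟩ := one_side hv δ hδv 1 hκpos hR₀pos (by
    intro z hz hzR
    obtain ⟨e1, e2, e3⟩ := hbound z hz hzR
    have hp := (hpde z hz).2
    have := Real.exp_pos (v z - u z)
    rw [one_mul, hp]
    linarith)
  obtain ⟨ε₄, hε₄, C₄, hC₄⟩ := one_side hv δ hδv (-1) hκpos hR₀pos (by
    intro z hz hzR
    obtain ⟨e1, e2, e3⟩ := hbound z hz hzR
    have hp := (hpde z hz).2
    have := Real.exp_pos (-(b * v z))
    rw [neg_one_mul, hp]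
    linarith)
  refine ⟨min (min ε₁ ε₂) (min ε₃ ε₄), by positivity, max (max C₁ C₂) (max C₃ C₄), ?_⟩
  intro z hz hzε
  have hz1 : ‖z‖ < ε₁ :=
    lt_of_lt_of_le hzε (le_trans (min_le_left _ _) (min_le_left _ _))
  have hz2 : ‖z‖ < ε₂ :=
    lt_of_lt_of_le hzε (le_trans (min_le_left _ _) (min_le_right _ _))
  have hz3 : ‖z‖ < ε₃ :=
    lt_of_lt_of_le hzε (le_trans (min_le_right _ _) (min_le_left _ _))
  have hz4 : ‖z‖ < ε₄ :=
    lt_of_lt_of_le hzε (le_trans (min_le_right _ _) (min_le_right _ _))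
  have b1 := hC₁ z hz hz1
  have b2 := hC₂ z hz hz2
  have b3 := hC₃ z hz hz3
  have b4 := hC₄ z hz hz4
  rw [one_mul] at b1 b3
  rw [neg_one_mul] at b2 b4
  constructor
  · rw [abs_le]
    constructor
    · have : C₂ ≤ max (max C₁ C₂) (max C₃ C₄) :=
        le_trans (le_max_right _ _) (le_max_left _ _)
      linarith
    · have : C₁ ≤ max (max C₁ C₂) (max C₃ C₄) :=
        le_trans (le_max_left _ _) (le_max_left _ _)
      linarith
  · rw [abs_le]
    constructor
    · have : C₄ ≤ max (max C₁ C₂) (max C₃ C₄) :=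
        le_trans (le_max_right _ _) (le_max_right _ _)
      linarith
    · have : C₃ ≤ max (max C₁ C₂) (max C₃ C₄) :=
        le_trans (le_max_left _ _) (le_max_right _ _)
      linarith
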